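/- For all Schwartz functions u, v ∈ 𝒮(ℝ), the function F₁(θ) := (1/2) ∫_ℝ u(θ + δ₁s) · v(θ + δ₃s) ds is well defined for every θ ∈ ℝ, and its Fourier transform satisfies, for every ξ ∈ ℝ: ∫_ℝ e^{−iξθ} F₁(θ) dθ = (1/2) · û(δ₃ξ) · v̂(−δ₁ξ). -/

import Mathlib

open MeasureTheory

lemma integral_comp_mul_add'' {E : Type*} [NormedAddCommGroup E] [NormedSpace ℝ E]
    (g : ℝ → E) (a b : ℝ) :
    (∫ x : ℝ, g (a * x + b)) = |a⁻¹| • ∫ y : ℝ, g y := by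
  rw [show (fun x : ℝ => g (a * x + b)) = fun x : ℝ => (fun y => g (y + b)) (a * x) from rfl,
    Measure.integral_comp_mul_left (fun y => g (y + b)) a, integral_add_right_eq_self g b]

lemma integral_eq_abs_smul'' {E : Type*} [NormedAddCommGroup E] [NormedSpace ℝ E]
    (g : ℝ → E) {a : ℝ} (ha : a ≠ 0) (b : ℝ) :
    (∫ x : ℝ, g x) = |a| • ∫ y : ℝ, g (a * y + b) := by
  rw [integral_comp_mul_add'' g a b, smul_smul, abs_inv,
    mul_inv_cancel₀ (abs_ne_zero.2 ha), one_smul]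

lemma integrable_comp_mul_add'' {E : Type*} [NormedAddCommGroup E]
    {g : ℝ → E} (hg : Integrable g (volume : Measure ℝ)) {a : ℝ} (ha : a ≠ 0) (b : ℝ) :
    Integrable (fun x : ℝ => g (a * x + b)) :=
  (hg.comp_add_right b).comp_mul_left' ha

lemma norm_exp_I'' (c r : ℝ) : ‖Complex.exp (-(Complex.I * c * r))‖ = 1 := by
  rw [Complex.norm_exp]; simp

theorem stmt13 (δ₁ δ₃ : ℝ) (hδ₁ : δ₁ ≠ 0) (hδ₃ : δ₃ = 1 + δ₁) (hδ₃' : δ₃ ≠ 0)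
    (u v : SchwartzMap ℝ ℂ) :
    (∀ θ : ℝ, Integrable (fun s : ℝ => u (θ + δ₁ * s) * v (θ + δ₃ * s))) ∧
    ∀ ξ : ℝ,
      (∫ θ : ℝ, Complex.exp (-(Complex.I * ξ * θ)) *
          ((1/2 : ℂ) * ∫ s : ℝ, u (θ + δ₁ * s) * v (θ + δ₃ * s))) =
        (1/2 : ℂ) * (∫ θ : ℝ, Complex.exp (-(Complex.I * (δ₃ * ξ) * θ)) * u θ) *
          (∫ θ : ℝ, Complex.exp (-(Complex.I * (-δ₁ * ξ) * θ)) * v θ) := by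
  have hubd : ∃ C, ∀ x : ℝ, ‖u x‖ ≤ C :=
    ⟨SchwartzMap.seminorm ℝ 0 0 u, fun x => SchwartzMap.norm_le_seminorm ℝ u x⟩
  constructor
  · intro θ
    have hv : Integrable (fun s : ℝ => (v (θ + δ₃ * s) : ℂ)) := by
      have := integrable_comp_mul_add'' v.integrable hδ₃' θ
      simpa [add_comm] using this
    refine hv.bdd_mul (c := SchwartzMap.seminorm ℝ 0 0 u) ?_ (Filter.Eventually.of_forall fun x => SchwartzMap.norm_le_seminorm ℝ u _)
    exact (u.continuous.comp (by continuity)).aestronglyMeasurable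
  · intro ξ
    -- key pointwise rewrite of the inner integral
    have hA : ∀ θ : ℝ, (∫ s : ℝ, (u (θ + δ₁ * s) * v (θ + δ₃ * s) : ℂ))
        = |δ₁⁻¹| • ∫ t : ℝ, (u t * v ((δ₃ * t - θ) / δ₁) : ℂ) := by
      intro θ
      rw [← integral_comp_mul_add'' (fun t => (u t * v ((δ₃ * t - θ) / δ₁) : ℂ)) δ₁ θ]
      congr 1; funext s
      have h1 : (δ₃ * (δ₁ * s + θ) - θ) / δ₁ = θ + δ₃ * s := by
        rw [hδ₃]; field_simp; ring
      rw [h1, show δ₁ * s + θ = θ + δ₁ * s from by ring]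
    set g : ℝ → ℝ → ℂ :=
      fun t θ => Complex.exp (-(Complex.I * ξ * θ)) * (u t * v ((δ₃ * t - θ) / δ₁)) with hg
    have hgcont : Continuous (Function.uncurry g) := by
      apply Continuous.mul
      · exact Complex.continuous_exp.comp (by continuity)
      · exact Continuous.mul (u.continuous.comp continuous_fst)
          (v.continuous.comp (by continuity))
    have hgint : Integrable (Function.uncurry g) ((volume : Measure ℝ).prod volume) := by
      rw [integrable_prod_iff hgcont.aestronglyMeasurable]
      constructor
      · refine Filter.Eventually.of_forall fun t => ?_
        have h1 : Integrable (fun θ : ℝ => (v ((δ₃ * t - θ) / δ₁) : ℂ)) := by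
          have := integrable_comp_mul_add'' v.integrable
            (a := -δ₁⁻¹) (by simpa using inv_ne_zero hδ₁) (δ₃ * t / δ₁)
          refine this.congr (Filter.Eventually.of_forall fun θ => ?_)
          show v (-δ₁⁻¹ * θ + δ₃ * t / δ₁) = v ((δ₃ * t - θ) / δ₁)
          have harg : -δ₁⁻¹ * θ + δ₃ * t / δ₁ = (δ₃ * t - θ) / δ₁ := by field_simp; ring
          rw [harg]
        have h2 : Integrable (fun θ : ℝ => (u t * v ((δ₃ * t - θ) / δ₁) : ℂ)) :=
          h1.const_mul _
        refine h2.bdd_mul (c := 1) ?_ (Filter.Eventually.of_forall fun θ => le_of_eq (norm_exp_I'' ξ θ))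
        exact (Complex.continuous_exp.comp (by continuity)).aestronglyMeasurable
      · have heq : (fun t : ℝ => ∫ θ : ℝ, ‖g t θ‖)
            = fun t : ℝ => (|δ₁| * ∫ y : ℝ, ‖(v y : ℂ)‖) * ‖(u t : ℂ)‖ := by
          funext t
          have h3 : ∀ θ : ℝ, ‖g t θ‖ = ‖(u t : ℂ)‖ * ‖(v ((δ₃ * t - θ) / δ₁) : ℂ)‖ := by
            intro θ; rw [hg]; simp only
            rw [norm_mul, norm_mul, norm_exp_I'', one_mul]
          simp_rw [h3]
          rw [integral_const_mul]
          have h4 : (∫ θ : ℝ, ‖(v ((δ₃ * t - θ) / δ₁) : ℂ)‖)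
              = |δ₁| * ∫ y : ℝ, ‖(v y : ℂ)‖ := by
            have := integral_comp_mul_add''
              (fun y : ℝ => ‖(v ((δ₃ * t - y) / δ₁) : ℂ)‖) (-δ₁) (δ₃ * t)
            rw [show (∫ y : ℝ, ‖(v ((δ₃ * t - (-δ₁ * y + δ₃ * t)) / δ₁) : ℂ)‖)
                = ∫ y : ℝ, ‖(v y : ℂ)‖ from by
              congr 1; funext y; congr 2; field_simp; ring] at this
            rw [abs_inv, abs_neg] at this
            rw [this, smul_eq_mul, ← mul_assoc,
              mul_inv_cancel₀ (abs_ne_zero.mpr hδ₁), one_mul]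
          rw [h4]; ring
        simp only [Function.uncurry_apply_pair]
        rw [heq]
        exact (u.integrable.norm.const_mul _)
    set V : ℂ := ∫ y : ℝ, Complex.exp (-(Complex.I * (-δ₁ * ξ) * y)) * v y with hV
    set U : ℂ := ∫ t : ℝ, Complex.exp (-(Complex.I * (δ₃ * ξ) * t)) * u t with hU
    have hB : ∀ t : ℝ, (∫ θ : ℝ, g t θ)
        = u t * (((|δ₁| : ℝ) : ℂ) * (Complex.exp (-(Complex.I * (δ₃ * ξ) * t)) * V)) := by
      intro t
      have hpull : (∫ θ : ℝ, g t θ)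
          = u t * ∫ θ : ℝ, Complex.exp (-(Complex.I * ξ * θ)) * v ((δ₃ * t - θ) / δ₁) := by
        rw [← integral_const_mul]
        congr 1; funext θ; rw [hg]; ring
      rw [hpull]
      congr 1
      have hs := integral_eq_abs_smul''
        (fun θ : ℝ => Complex.exp (-(Complex.I * ξ * θ)) * (v ((δ₃ * t - θ) / δ₁) : ℂ))
        (a := -δ₁) (neg_ne_zero.mpr hδ₁) (δ₃ * t)
      have hpt : ∀ y : ℝ,
          (fun θ : ℝ => Complex.exp (-(Complex.I * ξ * θ)) * (v ((δ₃ * t - θ) / δ₁) : ℂ))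
            (-δ₁ * y + δ₃ * t)
          = Complex.exp (-(Complex.I * ((δ₃ : ℂ) * (ξ : ℂ)) * (t : ℂ))) *
              (Complex.exp (-(Complex.I * (-(δ₁ : ℂ) * (ξ : ℂ)) * (y : ℂ))) * v y) := by
        intro y
        have harg : (δ₃ * t - (-δ₁ * y + δ₃ * t)) / δ₁ = y := by field_simp; ring
        simp only [harg]
        rw [show (-(Complex.I * (ξ : ℂ) * ((-δ₁ * y + δ₃ * t : ℝ) : ℂ)))
            = (-(Complex.I * ((δ₃ : ℂ) * (ξ : ℂ)) * (t : ℂ)))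
              + (-(Complex.I * (-(δ₁ : ℂ) * (ξ : ℂ)) * (y : ℂ))) from by push_cast; ring,
          Complex.exp_add]
        ring
      rw [hs, abs_neg]
      simp_rw [hpt]
      rw [integral_const_mul, Complex.real_smul, hV]
    have hC : ∀ θ : ℝ, (∫ t : ℝ, g t θ)
        = Complex.exp (-(Complex.I * ξ * θ)) * ∫ t : ℝ, (u t * v ((δ₃ * t - θ) / δ₁) : ℂ) :=
      fun θ => integral_const_mul _ _
    have hLHS : (∫ θ : ℝ, Complex.exp (-(Complex.I * ξ * θ)) *
          ((1/2 : ℂ) * ∫ s : ℝ, u (θ + δ₁ * s) * v (θ + δ₃ * s)))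
        = ((1/2 : ℂ) * ((|δ₁⁻¹| : ℝ) : ℂ)) * ∫ θ : ℝ, ∫ t : ℝ, g t θ := by
      rw [← integral_const_mul]
      congr 1; funext θ
      rw [hA θ, hC θ, Complex.real_smul]
      ring
    rw [hLHS, ← integral_integral_swap hgint]
    simp_rw [hB]
    have hfin : (fun t : ℝ => u t * (((|δ₁| : ℝ) : ℂ) *
          (Complex.exp (-(Complex.I * (δ₃ * ξ) * t)) * V)))
        = fun t : ℝ => (((|δ₁| : ℝ) : ℂ) * V) *
            (Complex.exp (-(Complex.I * (δ₃ * ξ) * t)) * u t) := by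
      funext t; ring
    rw [hfin, integral_const_mul, ← hU]
    have habs : ((|δ₁⁻¹| : ℝ) : ℂ) * ((|δ₁| : ℝ) : ℂ) = 1 := by
      rw [abs_inv]
      norm_cast
      exact inv_mul_cancel₀ (abs_ne_zero.mpr hδ₁)
    calc (1/2 : ℂ) * ((|δ₁⁻¹| : ℝ) : ℂ) * (((|δ₁| : ℝ) : ℂ) * V * U)
        = (((|δ₁⁻¹| : ℝ) : ℂ) * ((|δ₁| : ℝ) : ℂ)) * ((1/2 : ℂ) * U * V) := by ring
      _ = (1/2 : ℂ) * U * V := by rw [habs, one_mul]
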